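/- Let q be a prime power, h, k, n positive integers with hk ≤ n ≤ |Λ_{h,q}|, and let α₁, …, α_n be distinct elements of F_{q^h} each generating F_{q^h} over F_q and lying in pairwise distinct q-Frobenius orbits. Then the code S = {(f(α₁), …, f(α_n)) : f ∈ F_q[X], deg f < hk} ⊆ F_{q^h}^n is an F_q-linear code of F_q-dimension hk and minimum Hamming distance n − k + 1; in particular it attains the Singleton bound q^{hk} ≤ q^{h(n−d+1)} with equality (it is an additive MDS code). -/

import Mathlib

open Polynomial

variable {Fq K : Type} [Field Fq] [Fintype Fq] [Field K] [Fintype K] [DecidableEq K]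
    [Algebra Fq K]

lemma exists_algHom_pow (s : ℕ) :
    ∃ φ : K →ₐ[Fq] K, ∀ y : K, φ y = y ^ (Fintype.card Fq) ^ s := by
  haveI hc : CharP K (ringChar Fq) :=
    charP_of_injective_algebraMap (algebraMap Fq K).injective (ringChar Fq)
  obtain ⟨m, hp, hq⟩ := FiniteField.card Fq (ringChar Fq)
  haveI : Fact (ringChar Fq).Prime := ⟨hp⟩
  refine ⟨{ toRingHom := iterateFrobenius K (ringChar Fq) (m * s), commutes' := ?_ }, ?_⟩
  · intro c
    rw [RingHom.coe_mk] at *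
    show iterateFrobenius K (ringChar Fq) (m * s) (algebraMap Fq K c) = algebraMap Fq K c
    rw [iterateFrobenius_def, ← map_pow, pow_mul, ← hq, FiniteField.pow_card_pow]
  · intro y
    show iterateFrobenius K (ringChar Fq) (m * s) y = _
    rw [iterateFrobenius_def, pow_mul, ← hq]

lemma aeval_qpow (f : Polynomial Fq) (x : K) (s : ℕ) :
    aeval (x ^ (Fintype.card Fq) ^ s) f = (aeval x f) ^ (Fintype.card Fq) ^ s := by
  obtain ⟨φ, hφ⟩ := exists_algHom_pow (Fq := Fq) (K := K) s
  rw [← hφ, ← hφ, aeval_algHom_apply]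

lemma not_fixed (h : ℕ) (hrank : Module.finrank Fq K = h) (x : K)
    (hx : IntermediateField.adjoin Fq {x} = ⊤) (u : ℕ) (hu0 : 0 < u) (huh : u < h) :
    x ^ (Fintype.card Fq) ^ u ≠ x := by
  intro hfix
  obtain ⟨φ, hφ⟩ := exists_algHom_pow (Fq := Fq) (K := K) u
  set q := Fintype.card Fq with hqdef
  have hq1 : 1 < q := Fintype.one_lt_card
  -- all of K is fixed
  have hadj : Algebra.adjoin Fq ({x} : Set K) = ⊤ := by
    have := IntermediateField.adjoin_simple_toSubalgebra_of_isAlgebraic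
      (F := Fq) (α := x) (IsAlgebraic.of_finite Fq x)
    rw [hx, IntermediateField.top_toSubalgebra] at this
    exact this.symm
  have hall : ∀ y : K, y ^ q ^ u = y := by
    have hle : Algebra.adjoin Fq ({x} : Set K) ≤ AlgHom.equalizer φ (AlgHom.id Fq K) := by
      rw [Algebra.adjoin_le_iff]
      intro y hy
      rcases hy with rfl
      show φ y = y
      rw [hφ]; exact hfix
    intro y
    have : y ∈ AlgHom.equalizer φ (AlgHom.id Fq K) := by
      rw [hadj] at hle; exact hle trivial
    have := this
    rw [← hφ y]
    exact this
  -- counting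
  have hq1u : 1 < q ^ u := Nat.one_lt_pow hu0.ne' hq1
  have hne : (X ^ q ^ u - X : K[X]) ≠ 0 := FiniteField.X_pow_card_sub_X_ne_zero K hq1u
  have hdeg : (X ^ q ^ u - X : K[X]).natDegree = q ^ u :=
    FiniteField.X_pow_card_sub_X_natDegree_eq K hq1u
  have hsub : (Finset.univ : Finset K) ⊆ (X ^ q ^ u - X : K[X]).roots.toFinset := by
    intro y _
    rw [Multiset.mem_toFinset, Polynomial.mem_roots hne]
    simp [Polynomial.IsRoot, hall y]
  have hcard : Fintype.card K ≤ q ^ u := by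
    calc Fintype.card K = (Finset.univ : Finset K).card := rfl
      _ ≤ (X ^ q ^ u - X : K[X]).roots.toFinset.card := Finset.card_le_card hsub
      _ ≤ Multiset.card (X ^ q ^ u - X : K[X]).roots := Multiset.toFinset_card_le _
      _ ≤ (X ^ q ^ u - X : K[X]).natDegree := Polynomial.card_roots' _
      _ = q ^ u := hdeg
  have hcardK : Fintype.card K = q ^ h := by
    rw [Module.card_eq_pow_finrank (K := Fq) (V := K), hrank]
  rw [hcardK] at hcard
  exact absurd hcard (not_le.mpr (Nat.pow_lt_pow_right hq1 huh))

lemma pow_qpow_add (x : K) (q a b : ℕ) : (x ^ q ^ a) ^ q ^ b = x ^ q ^ (a + b) := by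
  rw [← pow_mul, ← pow_add]

lemma pow_qpow_h (h : ℕ) (hrank : Module.finrank Fq K = h) (x : K) :
    x ^ (Fintype.card Fq) ^ h = x := by
  have hcardK : Fintype.card K = (Fintype.card Fq) ^ h := by
    rw [Module.card_eq_pow_finrank (K := Fq) (V := K), hrank]
  rw [← hcardK, FiniteField.pow_card]

lemma orbit_inj (h : ℕ) (hrank : Module.finrank Fq K = h) (x : K)
    (hx : IntermediateField.adjoin Fq {x} = ⊤) {s t : ℕ} (hs : s < h) (ht : t < h)
    (heq : x ^ (Fintype.card Fq) ^ s = x ^ (Fintype.card Fq) ^ t) : s = t := by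
  set q := Fintype.card Fq
  by_contra hne
  -- wlog s < t
  wlog hlt : s < t generalizing s t
  · exact this ht hs heq.symm (Ne.symm hne) (by omega)
  have key : x ^ q ^ (s + (h - t)) = x := by
    rw [← pow_qpow_add, heq, pow_qpow_add]
    have : t + (h - t) = h := by omega
    rw [this]
    exact pow_qpow_h h hrank x
  exact not_fixed h hrank x hx (s + (h - t)) (by omega) (by omega) key

lemma minpoly_natDeg (h : ℕ) (hrank : Module.finrank Fq K = h) (x : K)
    (hx : IntermediateField.adjoin Fq {x} = ⊤) : (minpoly Fq x).natDegree = h := by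
  have := IntermediateField.adjoin.finrank (K := Fq) (L := K) (IsIntegral.of_finite Fq x)
  rw [hx] at this
  rw [← this, IntermediateField.finrank_top']
  exact hrank

lemma minpoly_roots (h : ℕ) (hrank : Module.finrank Fq K = h) (hh : 0 < h) (x : K)
    (hx : IntermediateField.adjoin Fq {x} = ⊤) (β : K)
    (hβ : Polynomial.aeval β (minpoly Fq x) = 0) :
    ∃ s : ℕ, s < h ∧ β = x ^ (Fintype.card Fq) ^ s := by
  set q := Fintype.card Fq with hq
  set P : K[X] := (minpoly Fq x).map (algebraMap Fq K) with hP
  have hx0 : IsIntegral Fq x := IsIntegral.of_finite Fq x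
  have hPne : P ≠ 0 := by
    rw [hP, Polynomial.map_ne_zero_iff (algebraMap Fq K).injective]
    exact minpoly.ne_zero hx0
  have hPdeg : P.natDegree = h := by
    rw [hP, Polynomial.natDegree_map, minpoly_natDeg h hrank x hx]
  have hroot : ∀ s : ℕ, x ^ q ^ s ∈ P.roots.toFinset := by
    intro s
    rw [Multiset.mem_toFinset, Polynomial.mem_roots hPne, Polynomial.IsRoot, hP,
      Polynomial.eval_map_algebraMap, aeval_qpow, minpoly.aeval]
    exact zero_pow (pow_ne_zero _ Fintype.card_pos.ne')
  set S : Finset K := Finset.image (fun s : Fin h => x ^ q ^ (s : ℕ)) Finset.univ with hS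
  have hScard : S.card = h := by
    rw [hS, Finset.card_image_of_injective _ ?_, Finset.card_univ, Fintype.card_fin]
    intro a b hab
    exact Fin.ext (orbit_inj h hrank x hx a.isLt b.isLt hab)
  have hSsub : S ⊆ P.roots.toFinset := by
    intro y hy
    rw [hS, Finset.mem_image] at hy
    obtain ⟨s, _, rfl⟩ := hy
    exact hroot s
  have hcard : P.roots.toFinset.card ≤ h := le_trans (Multiset.toFinset_card_le _)
    (hPdeg ▸ Polynomial.card_roots' _)
  have hSeq : S = P.roots.toFinset :=
    Finset.eq_of_subset_of_card_le hSsub (by omega)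
  have hβmem : β ∈ P.roots.toFinset := by
    rw [Multiset.mem_toFinset, Polynomial.mem_roots hPne, Polynomial.IsRoot, hP,
      Polynomial.eval_map_algebraMap]
    exact hβ
  rw [← hSeq, hS, Finset.mem_image] at hβmem
  obtain ⟨s, _, rfl⟩ := hβmem
  exact ⟨s, s.isLt, rfl⟩

lemma zeros_lt (h k n : ℕ) (hrank : Module.finrank Fq K = h) (hh : 0 < h)
    (α : Fin n → K)
    (hgen : ∀ r, IntermediateField.adjoin Fq {α r} = ⊤)
    (horb : ∀ r r', r ≠ r' → ∀ s : ℕ, α r ≠ (α r') ^ (Fintype.card Fq) ^ s)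
    (f : Polynomial Fq) (hf : f ∈ Polynomial.degreeLT Fq (h * k)) (hf0 : f ≠ 0) :
    (Finset.univ.filter (fun i : Fin n => Polynomial.aeval (α i) f = 0)).card < k := by
  classical
  set q := Fintype.card Fq with hq
  set Z := Finset.univ.filter (fun i : Fin n => Polynomial.aeval (α i) f = 0) with hZ
  by_contra hcon
  push_neg at hcon
  set F : K[X] := f.map (algebraMap Fq K) with hF
  have hFne : F ≠ 0 := by
    rw [hF, Polynomial.map_ne_zero_iff (algebraMap Fq K).injective]; exact hf0
  have hFdeg : F.natDegree < h * k := by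
    rw [hF, Polynomial.natDegree_map]
    have := Polynomial.mem_degreeLT.mp hf
    rwa [Polynomial.degree_eq_natDegree hf0, Nat.cast_lt] at this
  have hmem : ∀ p ∈ Z ×ˢ (Finset.univ : Finset (Fin h)),
      α p.1 ^ q ^ (p.2 : ℕ) ∈ F.roots.toFinset := by
    rintro ⟨i, s⟩ hp
    rw [Finset.mem_product, hZ, Finset.mem_filter] at hp
    rw [Multiset.mem_toFinset, Polynomial.mem_roots hFne, Polynomial.IsRoot, hF,
      Polynomial.eval_map_algebraMap, aeval_qpow, hp.1.2]
    exact zero_pow (pow_ne_zero _ Fintype.card_pos.ne')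
  have hinj : Set.InjOn (fun p : Fin n × Fin h => α p.1 ^ q ^ (p.2 : ℕ))
      ↑(Z ×ˢ (Finset.univ : Finset (Fin h))) := by
    rintro ⟨i, s⟩ _ ⟨j, t⟩ _ heq
    simp only at heq
    by_cases hij : i = j
    · subst hij
      have := orbit_inj h hrank (α i) (hgen i) s.isLt t.isLt heq
      simp [Prod.ext_iff, Fin.ext_iff, this]
    · exfalso
      have key : α i = α j ^ q ^ ((t : ℕ) + (h - (s : ℕ))) := by
        rw [← pow_qpow_add, ← heq, pow_qpow_add]
        have : (s : ℕ) + (h - (s : ℕ)) = h := by omega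
        rw [this, pow_qpow_h h hrank]
      exact horb i j hij _ key
  have hcards : h * k ≤ F.natDegree := by
    calc h * k = k * h := Nat.mul_comm h k
      _ ≤ Z.card * h := Nat.mul_le_mul_right h hcon
      _ = (Z ×ˢ (Finset.univ : Finset (Fin h))).card := by
          rw [Finset.card_product, Finset.card_univ, Fintype.card_fin]
      _ ≤ F.roots.toFinset.card := Finset.card_le_card_of_injOn _ hmem hinj
      _ ≤ Multiset.card F.roots := Multiset.toFinset_card_le _
      _ ≤ F.natDegree := Polynomial.card_roots' _
  omega

/-- the evaluation code S_{h,k,q}(α) (evaluating F_q-polynomials of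
degree < hk at generators α₁, …, α_n lying in pairwise distinct Frobenius orbits)
is an F_q-linear code of F_q-dimension hk and minimum Hamming distance n − k + 1
(an additive MDS code). -/
theorem sublinear_RS_code_is_MDS
    (Fq K : Type) [Field Fq] [Fintype Fq] [Field K] [Fintype K] [DecidableEq K]
    [Algebra Fq K]
    (h k n : ℕ) (hh : 0 < h) (hk0 : 0 < k)
    (hrank : Module.finrank Fq K = h)
    (hn : h * k ≤ n)
    (α : Fin n → K)
    (hgen : ∀ r, IntermediateField.adjoin Fq {α r} = ⊤)
    (horb : ∀ r r', r ≠ r' → ∀ s : ℕ, α r ≠ (α r') ^ (Fintype.card Fq) ^ s) :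
    ∀ L : Polynomial Fq →ₗ[Fq] (Fin n → K),
      L = LinearMap.pi (fun i => (Polynomial.aeval (α i)).toLinearMap) →
      Module.finrank Fq ↥(Submodule.map L (Polynomial.degreeLT Fq (h * k))) = h * k ∧
      (∀ f ∈ Polynomial.degreeLT Fq (h * k), f ≠ 0 →
        n - k + 1 ≤ hammingNorm (L f)) ∧
      (∃ f ∈ Polynomial.degreeLT Fq (h * k), f ≠ 0 ∧
        hammingNorm (L f) = n - k + 1) := by
  intro L hL
  have hkn : k ≤ n := le_trans (Nat.le_mul_of_pos_left k hh) hn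
  have hLapp : ∀ f (i : Fin n), L f i = Polynomial.aeval (α i) f := by
    intro f i; rw [hL]; rfl
  -- Hamming norm formula
  have hnorm : ∀ f : Polynomial Fq,
      hammingNorm (L f)
        = n - (Finset.univ.filter (fun i : Fin n => Polynomial.aeval (α i) f = 0)).card := by
    intro f
    have hsplit := Finset.card_filter_add_card_filter_not
      (s := (Finset.univ : Finset (Fin n)))
      (p := fun i : Fin n => Polynomial.aeval (α i) f = 0)
    have : hammingNorm (L f)
        = (Finset.univ.filter (fun i : Fin n => ¬ Polynomial.aeval (α i) f = 0)).card := by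
      unfold hammingNorm
      congr 1
      apply Finset.filter_congr
      intro i _
      simp [hLapp]
    rw [this]
    rw [Finset.card_univ, Fintype.card_fin] at hsplit
    omega
  -- minimum distance bound
  have hmin : ∀ f ∈ Polynomial.degreeLT Fq (h * k), f ≠ 0 →
      n - k + 1 ≤ hammingNorm (L f) := by
    intro f hf hf0
    have hz := zeros_lt h k n hrank hh α hgen horb f hf hf0
    have hzn : (Finset.univ.filter
        (fun i : Fin n => Polynomial.aeval (α i) f = 0)).card ≤ n := by
      calc _ ≤ (Finset.univ : Finset (Fin n)).card := Finset.card_filter_le _ _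
        _ = n := by rw [Finset.card_univ, Fintype.card_fin]
    rw [hnorm f]
    omega
  refine ⟨?_, hmin, ?_⟩
  · -- finrank
    have hinj : Function.Injective
        (L ∘ₗ (Polynomial.degreeLT Fq (h * k)).subtype) := by
      rw [← LinearMap.ker_eq_bot, LinearMap.ker_eq_bot']
      rintro ⟨f, hf⟩ hker
      simp only [LinearMap.comp_apply, Submodule.subtype_apply] at hker
      rw [Submodule.mk_eq_zero]
      by_contra hf0
      have := hmin f hf hf0
      rw [hker, hammingNorm_zero] at this
      omega
    have hmapeq : Submodule.map L (Polynomial.degreeLT Fq (h * k))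
        = LinearMap.range (L ∘ₗ (Polynomial.degreeLT Fq (h * k)).subtype) := by
      rw [LinearMap.range_comp, Submodule.range_subtype]
    rw [hmapeq, LinearMap.finrank_range_of_inj hinj]
    rw [(Polynomial.degreeLTEquiv Fq (h * k)).finrank_eq]
    exact Module.finrank_fin_fun Fq
  · -- existence of minimum weight codeword
    classical
    have hkn' : k - 1 ≤ n := by omega
    set T : Finset (Fin n) := Finset.map (Fin.castLEEmb hkn') Finset.univ with hT
    have hTcard : T.card = k - 1 := by
      rw [hT, Finset.card_map, Finset.card_univ, Fintype.card_fin]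
    set f : Polynomial Fq := ∏ i ∈ T, minpoly Fq (α i) with hfdef
    have hf0 : f ≠ 0 := by
      rw [hfdef]
      exact Finset.prod_ne_zero_iff.mpr
        (fun i _ => minpoly.ne_zero (IsIntegral.of_finite Fq (α i)))
    have hfdeg : f.natDegree = (k - 1) * h := by
      rw [hfdef, Polynomial.natDegree_prod _ _
        (fun i _ => minpoly.ne_zero (IsIntegral.of_finite Fq (α i)))]
      rw [Finset.sum_congr rfl (fun i _ => minpoly_natDeg h hrank (α i) (hgen i))]
      rw [Finset.sum_const, hTcard, smul_eq_mul]
    have hfmem : f ∈ Polynomial.degreeLT Fq (h * k) := by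
      rw [Polynomial.mem_degreeLT, Polynomial.degree_eq_natDegree hf0, Nat.cast_lt, hfdeg,
        Nat.mul_comm h k]
      exact (Nat.mul_lt_mul_right hh).mpr (by omega)
    have heval : ∀ j : Fin n, Polynomial.aeval (α j) f = 0 ↔ j ∈ T := by
      intro j
      constructor
      · intro hev
        by_contra hjT
        rw [hfdef, map_prod] at hev
        obtain ⟨i, hiT, hi0⟩ := Finset.prod_eq_zero_iff.mp hev
        obtain ⟨s, _, hs⟩ := minpoly_roots h hrank hh (α i) (hgen i) (α j) hi0
        exact horb j i (fun hji => hjT (hji ▸ hiT)) s hs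
      · intro hjT
        rw [hfdef, map_prod]
        exact Finset.prod_eq_zero hjT (minpoly.aeval Fq (α j))
    refine ⟨f, hfmem, hf0, ?_⟩
    rw [hnorm f]
    have : (Finset.univ.filter (fun i : Fin n => Polynomial.aeval (α i) f = 0)) = T := by
      ext j
      simp [heval j]
    rw [this, hTcard]
    omega
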